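/- Let (Ω,dist,μ) be a space of homogeneous type and let D = ∪_{k∈ℤ} D_k be a dyadic system with scaling parameter δ ∈ (0,1). For every r > 0 there exists an integer k(r) such that: whenever x ∈ Q ∈ D_{k(r)}, then Q ⊂ B(x,r) and μ(B(x,r)) ≤ C μ(Q), with constant C independent of x and r. -/

import Mathlib

open MeasureTheory Metric Filter ENNReal Set
open scoped ENNReal NNReal Topology

noncomputable section

/-- A metric measure space `(Ω, dist, μ)` is a *space of homogeneous type*
if all closed balls have positive finite measure and the doubling condition holds. -/
def IsHomogeneousType {Ω : Type*} [PseudoMetricSpace Ω] [MeasurableSpace Ω]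
    (μ : Measure Ω) : Prop :=
  (∀ (x : Ω) (r : ℝ), 0 < r → 0 < μ (closedBall x r) ∧ μ (closedBall x r) < ∞) ∧
  ∃ C : ℝ≥0∞, C < ∞ ∧ ∀ (x : Ω) (r : ℝ), 0 < r →
    μ (closedBall x (2 * r)) ≤ C * μ (closedBall x r)

/-- A *dyadic system* (in the sense of Hytönen–Kairema) with scaling parameter
`δ ∈ (0,1)` on a metric measure space: for each `k ∈ ℤ` a collection `cubes k` of
pairwise disjoint Borel sets of positive measure covering `Ω`, nested across
generations, each cube of generation `k` containing and being contained in balls of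
radii comparable to `δ^k`. -/
structure DyadicSystem {Ω : Type*} [PseudoMetricSpace Ω] [MeasurableSpace Ω]
    (μ : Measure Ω) (δ : ℝ) where
  cubes : ℤ → Set (Set Ω)
  measurableSet : ∀ k : ℤ, ∀ Q ∈ cubes k, MeasurableSet Q
  measure_pos : ∀ k : ℤ, ∀ Q ∈ cubes k, 0 < μ Q
  pairwiseDisjoint : ∀ k : ℤ, (cubes k).PairwiseDisjoint id
  cover : ∀ k : ℤ, ⋃₀ cubes k = Set.univ
  nested : ∀ k l : ℤ, k ≤ l → ∀ Q ∈ cubes k, ∀ R ∈ cubes l, R ⊆ Q ∨ Q ∩ R = ∅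
  center : ∀ k : ℤ, ∀ Q ∈ cubes k, ∃ z : Ω,
    closedBall z (δ ^ k / 3) ⊆ Q ∧ Q ⊆ closedBall z (2 * δ ^ k)

lemma doubling_iterate {Ω : Type*} [PseudoMetricSpace Ω] [MeasurableSpace Ω] {μ : Measure Ω}
    {A : ℝ≥0∞} (hA : ∀ (x : Ω) (r : ℝ), 0 < r → μ (closedBall x (2*r)) ≤ A * μ (closedBall x r)) :
    ∀ (n : ℕ) (x : Ω) (s : ℝ), 0 < s → μ (closedBall x (2^n * s)) ≤ A^n * μ (closedBall x s) := by
  intro n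
  induction n with
  | zero => simp
  | succ n ih =>
    intro x s hs
    have h1 : (2:ℝ)^(n+1) * s = 2 * (2^n * s) := by ring
    rw [h1]
    calc μ (closedBall x (2 * (2^n * s))) ≤ A * μ (closedBall x (2^n * s)) :=
          hA x _ (by positivity)
      _ ≤ A * (A^n * μ (closedBall x s)) := by gcongr; exact ih x s hs
      _ = A^(n+1) * μ (closedBall x s) := by rw [pow_succ, mul_comm (A^n) A, mul_assoc]


/-- **Lemma.**  Let `(Ω, dist, μ)` be a space of homogeneous type with a dyadic system of
scaling parameter `δ ∈ (0,1)`.  For every `r > 0` there is a generation `k(r) ∈ ℤ` such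
that whenever `x ∈ Q ∈ 𝒟_{k(r)}`, one has `Q ⊆ B(x,r)` and `μ(B(x,r)) ≤ C μ(Q)`, with a
constant `C` independent of `x` and `r`. -/
theorem dyadic_cube_inside_ball
    {Ω : Type*} [MetricSpace Ω] [MeasurableSpace Ω] {μ : Measure Ω} {δ : ℝ}
    (hμ : IsHomogeneousType μ) (hδ0 : 0 < δ) (hδ1 : δ < 1) (D : DyadicSystem μ δ) :
    ∃ C : ℝ≥0∞, C < ∞ ∧ ∀ r : ℝ, 0 < r → ∃ k : ℤ,
      ∀ Q ∈ D.cubes k, ∀ x ∈ Q, Q ⊆ closedBall x r ∧ μ (closedBall x r) ≤ C * μ Q := by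
  obtain ⟨hball, A, hAfin, hAdouble⟩ := hμ
  obtain ⟨N, hN⟩ := pow_unbounded_of_one_lt (18 / δ) (one_lt_two (α := ℝ))
  refine ⟨A ^ N, ENNReal.pow_lt_top hAfin, ?_⟩
  intro r hr
  have hδinv : (1:ℝ) < δ⁻¹ := (one_lt_inv₀ hδ0).mpr hδ1
  obtain ⟨n, hn1, hn2⟩ := _root_.exists_mem_Ico_zpow (x := 4 / r) (by positivity) hδinv
  refine ⟨n + 1, ?_⟩
  intro Q hQ x hx
  obtain ⟨z, hz1, hz2⟩ := D.center _ Q hQ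
  have hδk : (0:ℝ) < δ ^ (n+1) := zpow_pos hδ0 _
  have hδn : (0:ℝ) < δ ^ n := zpow_pos hδ0 _
  rw [inv_zpow] at hn1 hn2
  have h4r : (0:ℝ) < 4 / r := by positivity
  have h1 : δ ^ (n+1) < r / 4 := by
    have h := hn2
    rw [lt_inv_comm₀ h4r hδk, inv_div] at h
    exact h
  have h2 : r / 4 ≤ δ ^ n := by
    have h := hn1
    rw [inv_le_comm₀ hδn h4r, inv_div] at h
    exact h
  have hzn : δ ^ n = δ ^ (n+1) / δ := by
    rw [zpow_add_one₀ (ne_of_gt hδ0), mul_div_assoc, div_self (ne_of_gt hδ0), mul_one]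
  have hdist : dist x z ≤ 2 * δ ^ (n+1) := hz2 hx
  constructor
  · intro y hy
    have : dist y z ≤ 2 * δ ^ (n+1) := hz2 hy
    have : dist y x ≤ 4 * δ ^ (n+1) := by
      calc dist y x ≤ dist y z + dist z x := dist_triangle y z x
        _ ≤ 2 * δ ^ (n+1) + 2 * δ ^ (n+1) := by
            rw [dist_comm z x]; linarith
        _ = 4 * δ ^ (n+1) := by ring
    exact mem_closedBall.mpr (by linarith)
  · have hsub : closedBall x r ⊆ closedBall z (2^N * (δ ^ (n+1) / 3)) := by
      apply closedBall_subset_closedBall'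
      have hr4 : r ≤ 4 * (δ ^ (n+1) / δ) := by rw [← hzn]; linarith
      have hd1 : (1:ℝ) ≤ δ⁻¹ := le_of_lt hδinv
      have h18 : 18 / δ * (δ ^ (n+1) / 3) ≤ 2^N * (δ ^ (n+1) / 3) := by
        apply mul_le_mul_of_nonneg_right (le_of_lt hN) (by positivity)
      have h2d : 2 * δ ^ (n+1) ≤ 2 * (δ ^ (n+1) / δ) := by
        rw [div_eq_mul_inv]
        nlinarith
      have : r + dist x z ≤ 6 * (δ ^ (n+1) / δ) := by linarith
      have h6 : 6 * (δ ^ (n+1) / δ) = 18 / δ * (δ ^ (n+1) / 3) := by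
        field_simp; ring
      linarith [h18, h6 ▸ this]
    calc μ (closedBall x r) ≤ μ (closedBall z (2^N * (δ ^ (n+1) / 3))) := measure_mono hsub
      _ ≤ A^N * μ (closedBall z (δ ^ (n+1) / 3)) :=
          doubling_iterate hAdouble N z _ (by positivity)
      _ ≤ A^N * μ Q := mul_le_mul_right (measure_mono hz1) _

end
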